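/- Let F be a set of real-valued functions on a set H that is closed under negation (f ∈ F implies -f ∈ F), and let V1, V2 : H → ℝ. Suppose ψ : {-1,1} × ℝ → ℝ satisfies ψ(a, x) = ψ(-a, -x) and sign(ψ(1, x) - ψ(-1, x)) = sign(x) for all x. Fix h ∈ H. If f* ∈ F maximizes T(f) = ψ(1, f(h))·V1(h) + ψ(-1, f(h))·V2(h) over F, then sign(f*(h)) = sign(V1(h) - V2(h)) whenever V1(h) ≠ V2(h) and f*(h) ≠ 0. -/

import Mathlib

theorem stmt0 {H : Type*} (F : Set (H → ℝ))
    (hFne : F.Nonempty)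
    (hFneg : ∀ f ∈ F, (fun h => -f h) ∈ F)
    (V1 V2 : H → ℝ) (ψ : ℝ → ℝ → ℝ)
    (hsym : ∀ a ∈ ({-1, 1} : Set ℝ), ∀ x : ℝ, ψ a x = ψ (-a) (-x))
    (hsign : ∀ x : ℝ, Real.sign (ψ 1 x - ψ (-1) x) = Real.sign x)
    (h : H) (fstar : H → ℝ) (hmem : fstar ∈ F)
    (hmax : ∀ f ∈ F, ψ 1 (f h) * V1 h + ψ (-1) (f h) * V2 h ≤
      ψ 1 (fstar h) * V1 h + ψ (-1) (fstar h) * V2 h)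
    (hne : V1 h ≠ V2 h) (hfne : fstar h ≠ 0) :
    Real.sign (fstar h) = Real.sign (V1 h - V2 h) := by
  set x := fstar h with hx
  set A := V1 h
  set B := V2 h
  have hmemneg := hFneg fstar hmem
  have hineq := hmax _ hmemneg
  have h1 : ψ 1 (-x) = ψ (-1) x := by
    have := hsym 1 (by simp) (-x); simpa using this
  have h2 : ψ (-1) (-x) = ψ 1 x := by
    have := hsym (-1) (by simp) (-x); simpa using this
  rw [h1, h2] at hineq
  have key : 0 ≤ (ψ 1 x - ψ (-1) x) * (A - B) := by nlinarith
  have hdne : ψ 1 x - ψ (-1) x ≠ 0 := by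
    intro hd
    have := hsign x
    rw [hd, Real.sign_zero] at this
    exact hfne ((Real.sign_eq_zero_iff).mp this.symm)
  have hABne : A - B ≠ 0 := sub_ne_zero.mpr hne
  rw [← hsign x]
  rcases lt_or_gt_of_ne hdne with hlt | hgt
  · have hAB : A - B < 0 := by
      rcases lt_or_gt_of_ne hABne with h' | h'
      · exact h'
      · nlinarith
    rw [Real.sign_of_neg hlt, Real.sign_of_neg hAB]
  · have hAB : 0 < A - B := by
      rcases lt_or_gt_of_ne hABne with h' | h'
      · nlinarith
      · exact h'
    rw [Real.sign_of_pos hgt, Real.sign_of_pos hAB]
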